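/- Let N be a 2×2 real positive definite symmetric matrix with all entries positive. Then there exist vectors a, b ∈ ℝ² with N = a·aᵀ + b·bᵀ such that a₁, a₂, b₁ > 0 and b₂ < 0. -/

import Mathlib

theorem stmt_5 (N : Matrix (Fin 2) (Fin 2) ℝ) (hsymm : N.IsSymm) (hpd : N.PosDef)
    (hpos : ∀ i j, 0 < N i j) :
    ∃ a b : Fin 2 → ℝ, N = Matrix.vecMulVec a a + Matrix.vecMulVec b b ∧
      0 < a 0 ∧ 0 < a 1 ∧ 0 < b 0 ∧ b 1 < 0 := by
  obtain ⟨p, hp'⟩ : ∃ p, N 0 0 = p := ⟨_, rfl⟩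
  obtain ⟨q, hq'⟩ : ∃ q, N 0 1 = q := ⟨_, rfl⟩
  obtain ⟨r, hr'⟩ : ∃ r, N 1 1 = r := ⟨_, rfl⟩
  have hsym : N 1 0 = q := by
    have := congrFun (congrFun hsymm.eq 1) 0
    simp only [Matrix.transpose_apply] at this
    rw [← this, hq']
  have hp : 0 < p := hp' ▸ hpos 0 0
  have hq : 0 < q := hq' ▸ hpos 0 1
  have hr : 0 < r := hr' ▸ hpos 1 1
  have hdet : 0 < p * r - q * q := by
    have h := hpd.det_pos
    rw [Matrix.det_fin_two, hp', hq', hr', hsym] at h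
    linarith
  obtain ⟨D, hD, hD2⟩ : ∃ D, 0 < D ∧ D ^ 2 = p * r - q * q :=
    ⟨Real.sqrt (p * r - q * q), Real.sqrt_pos.mpr hdet, Real.sq_sqrt hdet.le⟩
  have hprpos : 0 < p * r := by positivity
  obtain ⟨E, hE, hE2⟩ : ∃ E, 0 < E ∧ E ^ 2 = p * r :=
    ⟨Real.sqrt (p * r), Real.sqrt_pos.mpr hprpos, Real.sq_sqrt hprpos.le⟩
  obtain ⟨t, ht, hct⟩ : ∃ t, 0 < t ∧ 4 * (p * r) * t ^ 2 = p * r - q * q := by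
    refine ⟨D / (2 * E), by positivity, ?_⟩
    rw [div_pow, mul_pow, hD2, hE2]
    field_simp
    ring
  have ht2lt : t ^ 2 < 1 := by nlinarith
  obtain ⟨c, hc, hc2⟩ : ∃ c, 0 < c ∧ c ^ 2 = 1 - t ^ 2 :=
    ⟨Real.sqrt (1 - t ^ 2), Real.sqrt_pos.mpr (by linarith), Real.sq_sqrt (by linarith)⟩
  have hkey : t * q < c * D := by
    have hsq : (t * q) ^ 2 < (c * D) ^ 2 := by
      rw [mul_pow, mul_pow, hc2, hD2]
      nlinarith [mul_pos hprpos hdet, sq_nonneg q]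
    exact lt_of_pow_lt_pow_left₀ 2 (by positivity) hsq
  obtain ⟨sp, hsp, hsp2⟩ : ∃ sp, 0 < sp ∧ sp ^ 2 = p :=
    ⟨Real.sqrt p, Real.sqrt_pos.mpr hp, Real.sq_sqrt hp.le⟩
  refine ⟨![c * sp, (c * q + t * D) / sp], ![t * sp, (t * q - c * D) / sp], ?_, ?_, ?_, ?_, ?_⟩
  · ext i j
    fin_cases i <;> fin_cases j <;>
      simp only [Matrix.add_apply, Matrix.vecMulVec_apply, Matrix.cons_val_zero,
        Matrix.cons_val_one, Matrix.head_cons, Fin.isValue, Fin.zero_eta, Fin.mk_one]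
    · rw [hp']; linear_combination (-(c^2+t^2))*hsp2 - p*hc2
    · rw [hq']; field_simp; linear_combination (-q)*hc2
    · rw [hsym]; field_simp; linear_combination (-q)*hc2
    · rw [hr']; field_simp; linear_combination r*hsp2 - (q^2+D^2)*hc2 - hD2
  · simp only [Matrix.cons_val_zero]; positivity
  · simp only [Matrix.cons_val_one, Matrix.head_cons]; show 0 < (c * q + t * D) / sp; positivity
  · simp only [Matrix.cons_val_zero]; positivity
  · simp only [Matrix.cons_val_one, Matrix.head_cons]
    exact div_neg_of_neg_of_pos (by linarith) hsp
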